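/- For n even and 1 ≤ j < (n+1)/2, the symmetric restricted Eulerian polynomial satisfies Â_{n,j}(t) = 2 Σ_{k=1}^{j-1} Â'_{n-1,k}(t) + (1+t) Σ_{k=j}^{n/2} Â_{n-1,k}(t). -/

import Mathlib

open scoped Classical

/-- The number of descents of a permutation of `Fin n` (positions are 0-based:
`i` is a descent if `w i > w (i+1)`). -/
def des {n : ℕ} (w : Equiv.Perm (Fin n)) : ℕ :=
  (Finset.univ.filter fun i : Fin n => ∃ h : (i : ℕ) + 1 < n, w ⟨(i : ℕ) + 1, h⟩ < w i).card

/-- `A n i j` = number of permutations `w` of `{1,…,n}` with `w(1) = j` (1-based)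
and exactly `i` descents. -/
def A (n i j : ℕ) : ℕ :=
  (Finset.univ.filter fun w : Equiv.Perm (Fin n) =>
    (∀ x : Fin n, (x : ℕ) = 0 → (w x : ℕ) + 1 = j) ∧ des w = i).card

/-- The Eulerian number: permutations of `{1,…,n}` with exactly `i` descents. -/
def Eul (n i : ℕ) : ℕ :=
  (Finset.univ.filter fun w : Equiv.Perm (Fin n) => des w = i).card

open Polynomial
open Equiv

/-- Restricted Eulerian polynomial `A_{n,j}(t) = Σ_{w(1)=j} t^{d(w)}`. -/
noncomputable def Apoly (n j : ℕ) : Polynomial ℤ :=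
  ∑ w ∈ (Finset.univ.filter fun w : Equiv.Perm (Fin n) =>
      ∀ x : Fin n, (x : ℕ) = 0 → (w x : ℕ) + 1 = j), X ^ des w

/-- Symmetric restricted Eulerian polynomial
`Â_{n,j}(t) = Σ_{w(1) ∈ {j, n+1-j}} t^{d(w)}`. -/
noncomputable def AhatPoly (n j : ℕ) : Polynomial ℤ :=
  ∑ w ∈ (Finset.univ.filter fun w : Equiv.Perm (Fin n) =>
      ∀ x : Fin n, (x : ℕ) = 0 → ((w x : ℕ) + 1 = j ∨ (w x : ℕ) + 1 = n + 1 - j)),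
    X ^ des w

/-- `Â'_{n,j}(t) = t·A_{n,j}(t) + A_{n,n+1-j}(t)`. -/
noncomputable def AhatPoly' (n j : ℕ) : Polynomial ℤ :=
  X * Apoly n j + Apoly n (n + 1 - j)


lemma des_eq_sum {N : ℕ} (w : Equiv.Perm (Fin (N + 1))) :
    des w = ∑ i : Fin N, if w i.succ < w i.castSucc then 1 else 0 := by
  rw [des, Finset.card_filter, Fin.sum_univ_castSucc]
  have hlast : (if ∃ h : ((Fin.last N : ℕ) + 1 < N + 1),
      w ⟨(Fin.last N : ℕ) + 1, h⟩ < w (Fin.last N) then 1 else 0) = 0 := by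
    rw [if_neg]
    rintro ⟨h, -⟩
    simp [Fin.val_last] at h
  rw [hlast, add_zero]
  refine Finset.sum_congr rfl fun i _ => ?_
  refine if_congr ?_ rfl rfl
  constructor
  · rintro ⟨h, hlt⟩
    convert hlt using 2
    ext; simp
  · intro hlt
    refine ⟨by simp [i.isLt, Nat.add_lt_add_right], ?_⟩
    convert hlt using 2
    ext; simp

/-- Insert `j0` at the front: `ins j0 v 0 = j0`, `ins j0 v i.succ = j0.succAbove (v i)`. -/
def ins {m : ℕ} (j0 : Fin (m + 1)) (v : Equiv.Perm (Fin m)) : Equiv.Perm (Fin (m + 1)) :=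
  (finSuccEquiv m).trans ((Equiv.optionCongr v).trans (finSuccEquiv' j0).symm)

@[simp] lemma ins_zero {m : ℕ} (j0 : Fin (m + 1)) (v : Equiv.Perm (Fin m)) :
    ins j0 v 0 = j0 := by
  simp [ins]

@[simp] lemma ins_succ {m : ℕ} (j0 : Fin (m + 1)) (v : Equiv.Perm (Fin m)) (i : Fin m) :
    ins j0 v i.succ = j0.succAbove (v i) := by
  simp [ins]

def del {m : ℕ} (j0 : Fin (m + 1)) (w : Equiv.Perm (Fin (m + 1))) : Equiv.Perm (Fin m) :=
  Equiv.removeNone ((finSuccEquiv m).symm.trans (w.trans (finSuccEquiv' j0)))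

lemma del_spec {m : ℕ} (j0 : Fin (m + 1)) (w : Equiv.Perm (Fin (m + 1)))
    (hw : w 0 = j0) (i : Fin m) : j0.succAbove (del j0 w i) = w i.succ := by
  set e := (finSuccEquiv m).symm.trans (w.trans (finSuccEquiv' j0)) with he
  have hne : w i.succ ≠ j0 := by
    rw [← hw]
    exact fun h => (Fin.succ_ne_zero i) (w.injective h)
  obtain ⟨y, hy⟩ := Fin.exists_succAbove_eq hne
  have hesome : e (some i) = some y := by
    simp [he, ← hy]
  have := Equiv.removeNone_some e ⟨y, hesome⟩
  rw [hesome] at this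
  have : del j0 w i = y := by
    simpa [del] using Option.some_injective _ this
  rw [this, hy]

lemma del_ins {m : ℕ} (j0 : Fin (m + 1)) (v : Equiv.Perm (Fin m)) :
    del j0 (ins j0 v) = v := by
  ext i
  have h0 : ins j0 v 0 = j0 := ins_zero j0 v
  have := del_spec j0 (ins j0 v) h0 i
  rw [ins_succ] at this
  exact congrArg Fin.val (j0.succAbove_right_injective this)

lemma ins_del {m : ℕ} (j0 : Fin (m + 1)) (w : Equiv.Perm (Fin (m + 1)))
    (hw : w 0 = j0) : ins j0 (del j0 w) = w := by
  ext x
  induction x using Fin.cases with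
  | zero => rw [ins_zero, hw]
  | succ i => rw [ins_succ, del_spec j0 w hw]

lemma des_ins {m : ℕ} (j0 : Fin (m + 2)) (v : Equiv.Perm (Fin (m + 1))) :
    des (ins j0 v) = des v + (if j0.succAbove (v 0) < j0 then 1 else 0) := by
  rw [des_eq_sum (ins j0 v), des_eq_sum v, Fin.sum_univ_succ]
  have h0 : ((0 : Fin (m + 1)).succ : Fin (m + 2)) = (0 : Fin (m + 1)).succ := rfl
  have t0 : (if ins j0 v (0 : Fin (m+1)).succ < ins j0 v (0 : Fin (m+1)).castSucc then 1 else 0)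
      = (if j0.succAbove (v 0) < j0 then 1 else 0) := by
    rw [ins_succ]
    norm_num [Fin.castSucc_zero]
  rw [t0, add_comm]
  congr 1
  refine Finset.sum_congr rfl fun i _ => ?_
  rw [show (i.succ : Fin (m+1)).castSucc = (i.castSucc : Fin (m+1)).succ from (Fin.succ_castSucc i).symm]
  rw [ins_succ, ins_succ]
  exact if_congr (Fin.succAbove_lt_succAbove_iff) rfl rfl

lemma cond_iff {N : ℕ} (P : Fin (N + 1) → Prop) (w : Equiv.Perm (Fin (N + 1))) :
    (∀ x : Fin (N + 1), (x : ℕ) = 0 → P (w x)) ↔ P (w 0) := by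
  constructor
  · intro h; exact h 0 rfl
  · intro h x hx
    have : x = 0 := Fin.ext hx
    rw [this]; exact h

lemma Apoly_eq {N : ℕ} (c : ℕ) :
    Apoly (N + 1) c = ∑ w ∈ Finset.univ.filter
      (fun w : Equiv.Perm (Fin (N + 1)) => (w 0 : ℕ) + 1 = c), X ^ des w := by
  rw [Apoly]
  congr 1
  exact Finset.filter_congr fun w _ => cond_iff (fun y => (y : ℕ) + 1 = c) w

lemma sum_shift (f : ℕ → Polynomial ℤ) (a b : ℕ) :
    ∑ i ∈ Finset.Ico a b, f (i + 1) = ∑ k ∈ Finset.Icc (a + 1) b, f k := by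
  rw [Finset.sum_Ico_add' f a b 1, ← Finset.Ico_add_one_right_eq_Icc]
  
lemma sum_reflect (f : ℕ → Polynomial ℤ) (n a b : ℕ) (ha : a ≤ n) (hb : b ≤ n) :
    ∑ k ∈ Finset.Icc a b, f (n - k) = ∑ k ∈ Finset.Icc (n - b) (n - a), f k := by
  refine Finset.sum_nbij' (i := fun k => n - k) (j := fun k => n - k) ?_ ?_ ?_ ?_ ?_
  · intro k hk
    simp only [Finset.mem_Icc] at hk ⊢
    omega
  · intro k hk
    simp only [Finset.mem_Icc] at hk ⊢
    omega
  · intro k hk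
    simp only [Finset.mem_Icc] at hk
    show n - (n - k) = k
    omega
  · intro k hk
    simp only [Finset.mem_Icc] at hk
    show n - (n - k) = k
    omega
  · intro k hk
    rfl

lemma Apoly_rec (m j : ℕ) (hj1 : 1 ≤ j) (hj : j ≤ m + 2) :
    Apoly (m + 2) j =
      X * ∑ k ∈ Finset.Icc 1 (j - 1), Apoly (m + 1) k
        + ∑ k ∈ Finset.Icc j (m + 1), Apoly (m + 1) k := by
  set j0 : Fin (m + 2) := ⟨j - 1, by omega⟩ with hj0
  -- Step A: reindex the sum over w with w 0 = j0 by v = del j0 w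
  have stepA : Apoly (m + 2) j =
      ∑ v : Equiv.Perm (Fin (m + 1)),
        X ^ des v * (if j0.succAbove (v 0) < j0 then (X : Polynomial ℤ) else 1) := by
    rw [Apoly_eq]
    refine Finset.sum_nbij' (i := fun w => del j0 w) (j := fun v => ins j0 v) ?_ ?_ ?_ ?_ ?_
    · intro w _; exact Finset.mem_univ _
    · intro v _
      simp only [Finset.mem_filter, Finset.mem_univ, true_and]
      rw [ins_zero]
      simp [hj0]
      omega
    · intro w hw
      simp only [Finset.mem_filter, Finset.mem_univ, true_and] at hw
      have hw0 : w 0 = j0 := by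
        ext
        simp [hj0]
        omega
      exact ins_del j0 w hw0
    · intro v _
      exact del_ins j0 v
    · intro w hw
      simp only [Finset.mem_filter, Finset.mem_univ, true_and] at hw
      have hw0 : w 0 = j0 := by
        ext
        simp [hj0]
        omega
      have hdes : des w = des (del j0 w) + (if j0.succAbove (del j0 w 0) < j0 then 1 else 0) := by
        conv_lhs => rw [← ins_del j0 w hw0]
        exact des_ins j0 (del j0 w)
      rw [hdes, pow_add]
      congr 1
      split <;> simp
  -- Step B: fiber over v 0
  have stepB : Apoly (m + 2) j =
      ∑ k : Fin (m + 1), (if (k : ℕ) < j - 1 then (X : Polynomial ℤ) else 1) * Apoly (m + 1) ((k : ℕ) + 1) := by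
    rw [stepA, ← Finset.sum_fiberwise Finset.univ (fun v : Equiv.Perm (Fin (m + 1)) => v 0)
      (fun v => X ^ des v * (if j0.succAbove (v 0) < j0 then (X : Polynomial ℤ) else 1))]
    refine Finset.sum_congr rfl fun k _ => ?_
    have hApk : Apoly (m + 1) ((k : ℕ) + 1) =
        ∑ v ∈ Finset.univ.filter (fun v : Equiv.Perm (Fin (m + 1)) => v 0 = k), X ^ des v := by
      rw [Apoly_eq]
      congr 1
      refine Finset.filter_congr fun v _ => ?_
      constructor
      · intro h; ext; omega
      · intro h; rw [h]
    rw [hApk, Finset.mul_sum]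
    refine Finset.sum_congr rfl fun v hv => ?_
    simp only [Finset.mem_filter, Finset.mem_univ, true_and] at hv
    rw [hv, mul_comm]
    congr 1
    refine if_congr ?_ rfl rfl
    rw [Fin.succAbove_lt_iff_castSucc_lt]
    simp only [Fin.lt_def, Fin.coe_castSucc, hj0]
  -- Step C: convert to interval sums
  rw [stepB]
  rw [Fin.sum_univ_eq_sum_range
    (fun i => (if i < j - 1 then (X : Polynomial ℤ) else 1) * Apoly (m + 1) (i + 1)) (m + 1)]
  rw [Finset.range_eq_Ico,
    ← Finset.sum_Ico_consecutive _ (Nat.zero_le (j - 1)) (show j - 1 ≤ m + 1 by omega)]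
  congr 1
  · have : ∀ i ∈ Finset.Ico 0 (j - 1),
        (if i < j - 1 then (X : Polynomial ℤ) else 1) * Apoly (m + 1) (i + 1)
          = X * Apoly (m + 1) (i + 1) := by
      intro i hi
      simp only [Finset.mem_Ico] at hi
      rw [if_pos hi.2]
    rw [Finset.sum_congr rfl this, ← Finset.mul_sum, sum_shift (fun k => Apoly (m + 1) k) 0 (j - 1)]
  · have : ∀ i ∈ Finset.Ico (j - 1) (m + 1),
        (if i < j - 1 then (X : Polynomial ℤ) else 1) * Apoly (m + 1) (i + 1)
          = Apoly (m + 1) (i + 1) := by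
      intro i hi
      simp only [Finset.mem_Ico] at hi
      rw [if_neg (by omega), one_mul]
    rw [Finset.sum_congr rfl this, sum_shift (fun k => Apoly (m + 1) k) (j - 1) (m + 1),
      show j - 1 + 1 = j by omega]

lemma AhatPoly_eq_add {N : ℕ} (c : ℕ) (hne : c ≠ N + 1 + 1 - c) :
    AhatPoly (N + 1) c = Apoly (N + 1) c + Apoly (N + 1) (N + 1 + 1 - c) := by
  rw [AhatPoly, Apoly_eq, Apoly_eq]
  have hfil : (Finset.univ.filter fun w : Equiv.Perm (Fin (N + 1)) =>
      ∀ x : Fin (N + 1), (x : ℕ) = 0 →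
        ((w x : ℕ) + 1 = c ∨ (w x : ℕ) + 1 = N + 1 + 1 - c))
      = Finset.univ.filter (fun w : Equiv.Perm (Fin (N + 1)) =>
          (w 0 : ℕ) + 1 = c ∨ (w 0 : ℕ) + 1 = N + 1 + 1 - c) :=
    Finset.filter_congr fun w _ =>
      cond_iff (fun y => (y : ℕ) + 1 = c ∨ (y : ℕ) + 1 = N + 1 + 1 - c) w
  rw [hfil, Finset.filter_or, Finset.sum_union]
  rw [Finset.disjoint_left]
  intro w h1 h2
  simp only [Finset.mem_filter, Finset.mem_univ, true_and] at h1 h2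
  exact hne (h1 ▸ h2)

lemma AhatPoly_eq_self {N : ℕ} (c : ℕ) (heq : c = N + 1 + 1 - c) :
    AhatPoly (N + 1) c = Apoly (N + 1) c := by
  rw [AhatPoly, Apoly_eq]
  congr 1
  refine Finset.filter_congr fun w _ => ?_
  rw [cond_iff (fun y => (y : ℕ) + 1 = c ∨ (y : ℕ) + 1 = N + 1 + 1 - c) w]
  rw [← heq, or_self]

lemma Icc_split (f : ℕ → Polynomial ℤ) (a b c : ℕ) (hab : a ≤ b + 1) (hbc : b ≤ c) :
    ∑ k ∈ Finset.Icc a c, f k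
      = ∑ k ∈ Finset.Icc a b, f k + ∑ k ∈ Finset.Icc (b + 1) c, f k := by
  rw [← Finset.Ico_add_one_right_eq_Icc, ← Finset.Ico_add_one_right_eq_Icc, ← Finset.Ico_add_one_right_eq_Icc,
    Finset.sum_Ico_consecutive f hab (show b + 1 ≤ c + 1 by omega)]

theorem stmt8 (n j : ℕ) (heven : Even n) (hj1 : 1 ≤ j) (hj : 2 * j ≤ n) :
    AhatPoly n j =
      2 * (∑ k ∈ Finset.Icc 1 (j - 1), AhatPoly' (n - 1) k) +
        (1 + X) * ∑ k ∈ Finset.Icc j (n / 2), AhatPoly (n - 1) k := by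
  obtain ⟨m, rfl⟩ : ∃ m, n = m + 2 := ⟨n - 2, by omega⟩
  obtain ⟨h, hh⟩ := heven
  set f : ℕ → Polynomial ℤ := fun k => Apoly (m + 1) k with hf
  have hhalf : (m + 2) / 2 = h := by omega
  have hjh : j ≤ h := by omega
  have hn1 : m + 2 - 1 = m + 1 := by omega
  set A := ∑ k ∈ Finset.Icc 1 (j - 1), f k with hA
  set M := ∑ k ∈ Finset.Icc j (m + 2 - j), f k with hM
  set C := ∑ k ∈ Finset.Icc (m + 2 - j + 1) (m + 1), f k with hC
  have L1 : AhatPoly (m + 2) j = Apoly (m + 2) j + Apoly (m + 2) (m + 2 + 1 - j) :=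
    AhatPoly_eq_add (N := m + 1) j (by omega)
  have S2 : ∑ k ∈ Finset.Icc j (m + 1), f k = M + C := by
    rw [Icc_split f j (m + 2 - j) (m + 1) (by omega) (by omega), ← hM, ← hC]
  have S1 : ∑ k ∈ Finset.Icc 1 (m + 2 - j), f k = A + M := by
    rw [Icc_split f 1 (j - 1) (m + 2 - j) (by omega) (by omega),
      show j - 1 + 1 = j by omega, ← hA, ← hM]
  have L2 : Apoly (m + 2) j = X * A + (M + C) := by
    rw [Apoly_rec m j hj1 (by omega), ← hA, S2]
  have L3 : Apoly (m + 2) (m + 2 + 1 - j) = X * (A + M) + C := by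
    rw [Apoly_rec m (m + 2 + 1 - j) (by omega) (by omega),
      show m + 2 + 1 - j - 1 = m + 2 - j by omega, S1,
      show m + 2 + 1 - j = m + 2 - j + 1 by omega, ← hC]
  have R1 : ∑ k ∈ Finset.Icc 1 (j - 1), AhatPoly' (m + 2 - 1) k = X * A + C := by
    rw [hn1]
    have hterm : ∀ k ∈ Finset.Icc 1 (j - 1),
        AhatPoly' (m + 1) k = X * f k + f (m + 2 - k) := by
      intro k hk
      rw [AhatPoly', hf]
    rw [Finset.sum_congr rfl hterm, Finset.sum_add_distrib, ← Finset.mul_sum, ← hA,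
      sum_reflect f (m + 2) 1 (j - 1) (by omega) (by omega),
      show m + 2 - (j - 1) = m + 2 - j + 1 by omega,
      show m + 2 - 1 = m + 1 by omega, ← hC]
  have R2 : ∑ k ∈ Finset.Icc j ((m + 2) / 2), AhatPoly (m + 2 - 1) k = M := by
    rw [hn1, hhalf]
    have hstep : ∀ k ∈ Finset.Icc j (h - 1),
        AhatPoly (m + 1) k = f k + f (m + 2 - k) := by
      intro k hk
      simp only [Finset.mem_Icc] at hk
      rw [AhatPoly_eq_add (N := m) k (by omega), hf]
    have htop : AhatPoly (m + 1) h = f h :=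
      AhatPoly_eq_self (N := m) h (by omega)
    have hsum1 : ∑ k ∈ Finset.Icc j h, AhatPoly (m + 1) k
        = ∑ k ∈ Finset.Icc j (h - 1), AhatPoly (m + 1) k + AhatPoly (m + 1) h := by
      rw [Icc_split (fun k => AhatPoly (m + 1) k) j (h - 1) h (by omega) (by omega),
        show h - 1 + 1 = h by omega, Finset.Icc_self, Finset.sum_singleton]
    rw [hsum1, Finset.sum_congr rfl hstep, Finset.sum_add_distrib,
      sum_reflect f (m + 2) j (h - 1) (by omega) (by omega),
      show m + 2 - (h - 1) = h + 1 by omega, htop]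
    have hMsplit : M = (∑ k ∈ Finset.Icc j (h - 1), f k + f h)
        + ∑ k ∈ Finset.Icc (h + 1) (m + 2 - j), f k := by
      rw [hM, Icc_split f j h (m + 2 - j) (by omega) (by omega),
        Icc_split f j (h - 1) h (by omega) (by omega),
        show h - 1 + 1 = h by omega, Finset.Icc_self, Finset.sum_singleton]
    rw [hMsplit]
    ring
  rw [L1, L2, L3, R1, R2]
  ring
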